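/- arXiv:2601.18046 — 5 statements merged into one kernel-verified Lean document; each statement's English description precedes it below -/
import Mathlib

section
/- Let R₀ > 0 and let E, H : (0, R₀) → ℝ be differentiable functions with E(R) ≥ 0 and H(R) > 0 for all R ∈ (0, R₀). Assume that for every R ∈ (0, R₀): (i) E(R) ≤ (R/2) H′(R), and (ii) (H′(R))² ≤ (2/R) H(R) E′(R). Then the frequency function N(R) := E(R)/H(R) is monotonically nondecreasing on (0, R₀). -/
open Set

/-- Almgren-type monotonicity of the frequency function `N = E/H`
under the differential inequalities `E ≤ (R/2) H'` and `(H')² ≤ (2/R) H E'`. -/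
theorem stmt_3 (R₀ : ℝ) (hR₀ : 0 < R₀) (E H : ℝ → ℝ)
    (hEdiff : ∀ R ∈ Ioo (0 : ℝ) R₀, DifferentiableAt ℝ E R)
    (hHdiff : ∀ R ∈ Ioo (0 : ℝ) R₀, DifferentiableAt ℝ H R)
    (hEpos : ∀ R ∈ Ioo (0 : ℝ) R₀, 0 ≤ E R)
    (hHpos : ∀ R ∈ Ioo (0 : ℝ) R₀, 0 < H R)
    (h1 : ∀ R ∈ Ioo (0 : ℝ) R₀, E R ≤ (R / 2) * deriv H R)
    (h2 : ∀ R ∈ Ioo (0 : ℝ) R₀, (deriv H R) ^ 2 ≤ (2 / R) * H R * deriv E R) :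
    MonotoneOn (fun R => E R / H R) (Ioo (0 : ℝ) R₀) := by
  have hdiff : ∀ R ∈ Ioo (0 : ℝ) R₀, DifferentiableAt ℝ (fun R => E R / H R) R := by
    intro R hR
    exact (hEdiff R hR).div (hHdiff R hR) (hHpos R hR).ne'
  apply monotoneOn_of_deriv_nonneg (convex_Ioo _ _)
  · exact fun R hR => ((hdiff R hR).continuousAt).continuousWithinAt
  · intro R hR
    rw [interior_Ioo] at hR
    exact (hdiff R hR).differentiableWithinAt
  · intro R hR
    rw [interior_Ioo] at hR
    obtain ⟨hR1, hR2⟩ := hR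
    have hH := hHpos R ⟨hR1, hR2⟩
    rw [deriv_fun_div (hEdiff R ⟨hR1, hR2⟩) (hHdiff R ⟨hR1, hR2⟩) hH.ne']
    apply div_nonneg _ (by positivity)
    have h1' := h1 R ⟨hR1, hR2⟩
    have h2' := h2 R ⟨hR1, hR2⟩
    have hE := hEpos R ⟨hR1, hR2⟩
    have hH' : 0 ≤ deriv H R := by nlinarith
    have key : E R * deriv H R ≤ (R / 2) * (deriv H R) ^ 2 := by nlinarith
    have key2 : (R / 2) * (deriv H R) ^ 2 ≤ H R * deriv E R := by
      have : (R / 2) * ((2 / R) * H R * deriv E R) = H R * deriv E R := by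
        field_simp
      nlinarith
    linarith
end

section
/- Let n ≥ 1, let (X, d) be a metric space, and let f : ℝⁿ → X be continuous. Suppose there are constants C₁ ≥ 0 and R₀ > 0 such that for every x ∈ ℝⁿ and every 0 < R ≤ R₀, ∫_{B_R(x)} d(f(y), f(x))² dy ≤ C₁ R^{n+2}. Then there is a constant c = c(n), depending only on n, such that d(f(x₁), f(x₂)) ≤ c √C₁ |x₁ − x₂| for all x₁, x₂ ∈ ℝⁿ with |x₁ − x₂| ≤ R₀. In particular f is Lipschitz continuous on scales up to R₀. -/
open Set MeasureTheory Metric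

/-- A Campanato/Morrey-type criterion for Lipschitz continuity:
if a continuous map `f : ℝⁿ → X` into a metric space satisfies
`∫_{B_R(x)} d(f(y), f(x))² dy ≤ C₁ R^{n+2}` for all `x` and all `0 < R ≤ R₀`,
then `d(f(x₁), f(x₂)) ≤ c(n) √C₁ |x₁ − x₂|` whenever `|x₁ − x₂| ≤ R₀`. -/
theorem stmt_5 (n : ℕ) (hn : 1 ≤ n) :
    ∃ c : ℝ, 0 < c ∧
      ∀ (X : Type) [MetricSpace X] (f : EuclideanSpace ℝ (Fin n) → X),
        Continuous f →
        ∀ (C₁ R₀ : ℝ), 0 ≤ C₁ → 0 < R₀ →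
        (∀ (x : EuclideanSpace ℝ (Fin n)) (R : ℝ), 0 < R → R ≤ R₀ →
          (∫ y in ball x R, dist (f y) (f x) ^ 2) ≤ C₁ * R ^ (n + 2)) →
        ∀ x₁ x₂ : EuclideanSpace ℝ (Fin n), dist x₁ x₂ ≤ R₀ →
          dist (f x₁) (f x₂) ≤ c * Real.sqrt C₁ * dist x₁ x₂ := by
  classical
  haveI : Nontrivial (EuclideanSpace ℝ (Fin n)) := by
    have h : 0 < Module.finrank ℝ (EuclideanSpace ℝ (Fin n)) := by
      rw [finrank_euclideanSpace_fin]; exact hn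
    exact Module.nontrivial_of_finrank_pos h
  set V : ℝ := (volume (ball (0 : EuclideanSpace ℝ (Fin n)) 1)).toReal with hVdef
  have hV : 0 < V := by
    apply ENNReal.toReal_pos
    · exact (measure_ball_pos volume _ one_pos).ne'
    · exact measure_ball_lt_top.ne
  refine ⟨Real.sqrt (2 ^ (n + 2) / V), Real.sqrt_pos.mpr (by positivity), ?_⟩
  intro X _ f hf C₁ R₀ hC₁ hR₀ hyp x₁ x₂ hx
  rcases eq_or_lt_of_le (dist_nonneg : (0 : ℝ) ≤ dist x₁ x₂) with h0 | h0
  · have hx12 : x₁ = x₂ := by rw [← dist_eq_zero, ← h0]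
    simp [hx12]
  set r : ℝ := dist x₁ x₂ with hr
  set m : EuclideanSpace ℝ (Fin n) := midpoint ℝ x₁ x₂ with hm
  have hm₁ : dist m x₁ = r / 2 := by
    rw [hm, dist_midpoint_left]; norm_num [hr]; ring
  have hm₂ : dist m x₂ = r / 2 := by
    rw [hm, dist_midpoint_right]; norm_num [hr]; ring
  have hsub₁ : ball m (r / 2) ⊆ ball x₁ r := by
    intro y hy
    have := dist_triangle y m x₁
    simp only [mem_ball] at hy ⊢
    rw [hm₁] at this; linarith
  have hsub₂ : ball m (r / 2) ⊆ ball x₂ r := by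
    intro y hy
    have := dist_triangle y m x₂
    simp only [mem_ball] at hy ⊢
    rw [hm₂] at this; linarith
  -- integrability of the squared distance on any ball
  have hint : ∀ (z c : EuclideanSpace ℝ (Fin n)) (ρ : ℝ),
      IntegrableOn (fun y => dist (f y) (f z) ^ 2) (ball c ρ) volume := by
    intro z c ρ
    have hcont : Continuous (fun y => dist (f y) (f z) ^ 2) :=
      (hf.dist continuous_const).pow 2
    exact (hcont.locallyIntegrable.integrableOn_isCompact
      (isCompact_closedBall c ρ)).mono_set ball_subset_closedBall
  have hvol : (volume (ball m (r / 2))).toReal = (r / 2) ^ n * V := by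
    rw [Measure.addHaar_ball volume m (by positivity : (0:ℝ) ≤ r / 2),
      finrank_euclideanSpace_fin, ENNReal.toReal_mul,
      ENNReal.toReal_ofReal (by positivity)]
  have key : (r / 2) ^ n * V * dist (f x₁) (f x₂) ^ 2 ≤ 4 * (C₁ * r ^ (n + 2)) := by
    have h1 : (r / 2) ^ n * V * dist (f x₁) (f x₂) ^ 2
        = ∫ _ in ball m (r / 2), dist (f x₁) (f x₂) ^ 2 := by
      rw [setIntegral_const, measureReal_def, hvol, smul_eq_mul]
    have h2 : (∫ _ in ball m (r / 2), dist (f x₁) (f x₂) ^ 2)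
        ≤ ∫ y in ball m (r / 2),
            (2 * dist (f y) (f x₁) ^ 2 + 2 * dist (f y) (f x₂) ^ 2) := by
      apply setIntegral_mono_on
      · exact integrableOn_const measure_ball_lt_top.ne
      · exact (((hint x₁ m (r / 2)).const_mul 2).add
          ((hint x₂ m (r / 2)).const_mul 2))
      · exact measurableSet_ball
      · intro y _
        have ht := dist_triangle (f x₁) (f y) (f x₂)
        have h1' : dist (f x₁) (f y) = dist (f y) (f x₁) := dist_comm _ _
        rw [h1'] at ht
        nlinarith [sq_nonneg (dist (f y) (f x₁) - dist (f y) (f x₂)),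
          dist_nonneg (x := f x₁) (y := f x₂),
          dist_nonneg (x := f y) (y := f x₁), dist_nonneg (x := f y) (y := f x₂)]
    have h3 : (∫ y in ball m (r / 2),
          (2 * dist (f y) (f x₁) ^ 2 + 2 * dist (f y) (f x₂) ^ 2))
        = 2 * (∫ y in ball m (r / 2), dist (f y) (f x₁) ^ 2)
          + 2 * (∫ y in ball m (r / 2), dist (f y) (f x₂) ^ 2) := by
      rw [integral_add (((hint x₁ m (r / 2)).const_mul 2))
        (((hint x₂ m (r / 2)).const_mul 2)), integral_const_mul, integral_const_mul]
    have h4 : (∫ y in ball m (r / 2), dist (f y) (f x₁) ^ 2)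
        ≤ ∫ y in ball x₁ r, dist (f y) (f x₁) ^ 2 := by
      apply setIntegral_mono_set (hint x₁ x₁ r)
      · filter_upwards with y using by positivity
      · exact HasSubset.Subset.eventuallyLE hsub₁
    have h5 : (∫ y in ball m (r / 2), dist (f y) (f x₂) ^ 2)
        ≤ ∫ y in ball x₂ r, dist (f y) (f x₂) ^ 2 := by
      apply setIntegral_mono_set (hint x₂ x₂ r)
      · filter_upwards with y using by positivity
      · exact HasSubset.Subset.eventuallyLE hsub₂
    have h6 := hyp x₁ r h0 hx
    have h7 := hyp x₂ r h0 hx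
    calc (r / 2) ^ n * V * dist (f x₁) (f x₂) ^ 2
        = ∫ _ in ball m (r / 2), dist (f x₁) (f x₂) ^ 2 := h1
      _ ≤ _ := h2
      _ = _ := h3
      _ ≤ 2 * (C₁ * r ^ (n + 2)) + 2 * (C₁ * r ^ (n + 2)) := by
          gcongr <;> [exact le_trans h4 h6; exact le_trans h5 h7]
      _ = 4 * (C₁ * r ^ (n + 2)) := by ring
  -- From key, deduce the squared bound
  have hd2 : dist (f x₁) (f x₂) ^ 2 ≤ (2 ^ (n + 2) / V) * C₁ * r ^ 2 := by
    have hrn : (0:ℝ) < (r / 2) ^ n * V := by positivity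
    rw [div_mul_eq_mul_div, div_mul_eq_mul_div, le_div_iff₀ hV]
    have hrpow : r ^ (n + 2) = r ^ n * r ^ 2 := by ring
    have h2n : ((r:ℝ) / 2) ^ n = r ^ n / 2 ^ n := div_pow r 2 n
    rw [h2n] at key
    have h2npos : (0:ℝ) < (2:ℝ) ^ n := by positivity
    calc dist (f x₁) (f x₂) ^ 2 * V
        = (2:ℝ) ^ n / r ^ n * (r ^ n / 2 ^ n * V * dist (f x₁) (f x₂) ^ 2) := by
          field_simp
      _ ≤ (2:ℝ) ^ n / r ^ n * (4 * (C₁ * r ^ (n + 2))) := by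
          apply mul_le_mul_of_nonneg_left key (by positivity)
      _ = 2 ^ (n + 2) * C₁ * r ^ 2 := by
          rw [hrpow]; field_simp; ring
  calc dist (f x₁) (f x₂)
      = Real.sqrt (dist (f x₁) (f x₂) ^ 2) := (Real.sqrt_sq dist_nonneg).symm
    _ ≤ Real.sqrt ((2 ^ (n + 2) / V) * C₁ * r ^ 2) := Real.sqrt_le_sqrt hd2
    _ = Real.sqrt (2 ^ (n + 2) / V) * Real.sqrt C₁ * r := by
        rw [Real.sqrt_mul (by positivity), Real.sqrt_mul (by positivity),
          Real.sqrt_sq (le_of_lt h0)]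
end

section
/- Let k > 0. There exists a constant c = c(k) > 0 with the following property: for every A ≥ 0 and every bounded nondecreasing function ψ : [1/2, 1] → [0, ∞) satisfying ψ(σ) ≤ A (η − σ)^{−k} ψ(η)^{1/2} for all 1/2 ≤ σ < η ≤ 1, one has ψ(1/2) ≤ c A². -/
open Set

/-- An iteration lemma: if a bounded nondecreasing nonnegative function `ψ`
on `[1/2, 1]` satisfies `ψ(σ) ≤ A (η−σ)^{−k} ψ(η)^{1/2}` for all `1/2 ≤ σ < η ≤ 1`,
then `ψ(1/2) ≤ c A²` with `c = c(k)`. -/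
theorem stmt_6 (k : ℝ) (hk : 0 < k) :
    ∃ c : ℝ, 0 < c ∧ ∀ A : ℝ, 0 ≤ A → ∀ ψ : ℝ → ℝ,
      MonotoneOn ψ (Icc (1 / 2 : ℝ) 1) →
      (∀ σ ∈ Icc (1 / 2 : ℝ) 1, 0 ≤ ψ σ) →
      BddAbove (ψ '' Icc (1 / 2 : ℝ) 1) →
      (∀ σ η : ℝ, 1 / 2 ≤ σ → σ < η → η ≤ 1 →
        ψ σ ≤ A * (η - σ) ^ (-k) * Real.sqrt (ψ η)) →
      ψ (1 / 2) ≤ c * A ^ 2 := by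
  set u : ℝ := (2 : ℝ) ^ k with hu_def
  have hu1 : 1 ≤ u := Real.one_le_rpow (by norm_num) hk.le
  have hu0 : 0 < u := lt_of_lt_of_le one_pos hu1
  refine ⟨u ^ 6 + 1, by positivity, ?_⟩
  intro A hA ψ hmono hpos _ hiter
  set θ : ℝ := 1 / (2 * u ^ 2) with hθ_def
  have hθ0 : 0 < θ := by positivity
  have hθ1 : θ < 1 := by
    rw [hθ_def, div_lt_one (by positivity)]
    nlinarith
  -- the iteration points
  set s : ℕ → ℝ := fun n => 1 - (1 / 2 : ℝ) ^ (n + 1) with hs_def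
  have hs_half : ∀ n, (1 / 2 : ℝ) ≤ s n := by
    intro n
    have : (1 / 2 : ℝ) ^ (n + 1) ≤ (1 / 2 : ℝ) ^ 1 :=
      pow_le_pow_of_le_one (by norm_num) (by norm_num) (by omega)
    simp only [hs_def]
    nlinarith
  have hs_le1 : ∀ n, s n ≤ 1 := by
    intro n
    have : (0 : ℝ) < (1 / 2 : ℝ) ^ (n + 1) := by positivity
    simp only [hs_def]; nlinarith
  have hs_mem : ∀ n, s n ∈ Icc (1 / 2 : ℝ) 1 := fun n => ⟨hs_half n, hs_le1 n⟩
  have hs_lt : ∀ n, s n < s (n + 1) := by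
    intro n
    have : (1 / 2 : ℝ) ^ (n + 1 + 1) < (1 / 2 : ℝ) ^ (n + 1) :=
      pow_lt_pow_right_of_lt_one₀ (by norm_num) (by norm_num) (by omega)
    simp only [hs_def]; nlinarith
  have hs_diff : ∀ n : ℕ, s (n + 1) - s n = (1 / 2 : ℝ) ^ (n + 2) := by
    intro n
    simp only [hs_def]
    ring_nf
  -- the rpow computation
  have hδ : ∀ n : ℕ, ((1 / 2 : ℝ) ^ (n + 2)) ^ (-k) = u ^ (n + 2) := by
    intro n
    have h1 : ((1 / 2 : ℝ) ^ (n + 2)) ^ (-k) = ((1 / 2 : ℝ) ^ (-k)) ^ (n + 2) := by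
      rw [← Real.rpow_natCast ((1 / 2 : ℝ)) (n + 2), ← Real.rpow_mul (by norm_num),
        mul_comm, Real.rpow_mul (by norm_num), Real.rpow_natCast]
    rw [h1]
    congr 1
    rw [Real.rpow_neg (by norm_num), one_div, Real.inv_rpow (by norm_num), inv_inv]
  -- one-step inequality with AM-GM
  have hstep : ∀ n : ℕ, ψ (s n) ≤ θ * ψ (s (n + 1)) + A ^ 2 * (u ^ (n + 2)) ^ 2 / (4 * θ) := by
    intro n
    have h1 := hiter (s n) (s (n + 1)) (hs_half n) (hs_lt n) (hs_le1 (n + 1))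
    rw [hs_diff n, hδ n] at h1
    set x : ℝ := ψ (s (n + 1)) with hx_def
    have hx0 : 0 ≤ x := hpos _ (hs_mem (n + 1))
    have hsq : Real.sqrt x ^ 2 = x := Real.sq_sqrt hx0
    have hsnn : 0 ≤ Real.sqrt x := Real.sqrt_nonneg x
    have hB : 0 ≤ A * u ^ (n + 2) := by positivity
    have key : A * u ^ (n + 2) * Real.sqrt x ≤ θ * x + A ^ 2 * (u ^ (n + 2)) ^ 2 / (4 * θ) := by
      have h4θ : (0:ℝ) < 4 * θ := by positivity
      have e2 : θ * x + A ^ 2 * (u ^ (n + 2)) ^ 2 / (4 * θ) - A * u ^ (n + 2) * Real.sqrt x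
          = (2 * θ * Real.sqrt x - A * u ^ (n + 2)) ^ 2 / (4 * θ) := by
        rw [← hsq]
        field_simp
        ring_nf
        rw [hsq, hsq]
      have e3 : (0:ℝ) ≤ (2 * θ * Real.sqrt x - A * u ^ (n + 2)) ^ 2 / (4 * θ) :=
        div_nonneg (sq_nonneg _) h4θ.le
      linarith
    calc ψ (s n) ≤ A * u ^ (n + 2) * Real.sqrt x := h1
      _ ≤ _ := key
  -- the error term identity
  have hid : ∀ n : ℕ, θ ^ n * (A ^ 2 * (u ^ (n + 2)) ^ 2 / (4 * θ)) =
      A ^ 2 * u ^ 6 * (1 / 2) ^ (n + 1) := by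
    intro n
    rw [hθ_def]
    field_simp
    simp only [one_div, inv_pow, mul_pow, ← pow_mul]
    field_simp
    ring
  -- the iteration
  have hiterN : ∀ N : ℕ, ψ (s 0) ≤ θ ^ N * ψ (s N) + A ^ 2 * u ^ 6 * (1 - (1 / 2) ^ N) := by
    intro N
    induction N with
    | zero => simp
    | succ N ih =>
      have h1 := hstep N
      have h2 : θ ^ N * ψ (s N) ≤ θ ^ N * (θ * ψ (s (N + 1)) + A ^ 2 * (u ^ (N + 2)) ^ 2 / (4 * θ)) :=
        mul_le_mul_of_nonneg_left h1 (by positivity)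
      have h3 := hid N
      calc ψ (s 0) ≤ θ ^ N * ψ (s N) + A ^ 2 * u ^ 6 * (1 - (1 / 2) ^ N) := ih
        _ ≤ θ ^ N * (θ * ψ (s (N + 1)) + A ^ 2 * (u ^ (N + 2)) ^ 2 / (4 * θ))
            + A ^ 2 * u ^ 6 * (1 - (1 / 2) ^ N) := by linarith
        _ = θ ^ (N + 1) * ψ (s (N + 1)) + θ ^ N * (A ^ 2 * (u ^ (N + 2)) ^ 2 / (4 * θ))
            + A ^ 2 * u ^ 6 * (1 - (1 / 2) ^ N) := by ring
        _ = θ ^ (N + 1) * ψ (s (N + 1)) + A ^ 2 * u ^ 6 * (1 - (1 / 2) ^ (N + 1)) := by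
            rw [h3]; ring
  -- bound ψ (s N) by ψ 1 and pass to the limit
  have hψ1 : ∀ N, ψ (s N) ≤ ψ 1 := fun N =>
    hmono (hs_mem N) (by constructor <;> norm_num) (hs_le1 N)
  have hψ1nn : 0 ≤ ψ 1 := hpos 1 (by constructor <;> norm_num)
  have hbound : ∀ N : ℕ, ψ (1 / 2) ≤ θ ^ N * ψ 1 + A ^ 2 * u ^ 6 := by
    intro N
    have h0 : s 0 = 1 / 2 := by simp [hs_def]; norm_num
    have := hiterN N
    rw [h0] at this
    have h2 : θ ^ N * ψ (s N) ≤ θ ^ N * ψ 1 :=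
      mul_le_mul_of_nonneg_left (hψ1 N) (by positivity)
    have h3 : A ^ 2 * u ^ 6 * (1 - (1 / 2) ^ N) ≤ A ^ 2 * u ^ 6 := by
      have h5 : (0:ℝ) ≤ (1/2:ℝ) ^ N := by positivity
      have h6 : (0:ℝ) ≤ A ^ 2 * u ^ 6 := by positivity
      nlinarith
    linarith
  have htend : Filter.Tendsto (fun N : ℕ => θ ^ N * ψ 1 + A ^ 2 * u ^ 6)
      Filter.atTop (nhds (0 * ψ 1 + A ^ 2 * u ^ 6)) := by
    exact ((tendsto_pow_atTop_nhds_zero_of_lt_one hθ0.le hθ1).mul_const _).add_const _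
  have hfinal : ψ (1 / 2) ≤ 0 * ψ 1 + A ^ 2 * u ^ 6 := ge_of_tendsto' htend hbound
  nlinarith [sq_nonneg A]
end

section
/- Let n, L ≥ 1, ε > 0, Q ∈ ℝ^L, M > 0, 0 ≤ a < b, and let u : ℝⁿ × (a,b) → ℝ^L be smooth with u(x,t) = Q whenever |x| ≥ M. Set F := −ε ∂²_t u + ∂_t u − Δu, and assume the pointwise orthogonality F(x,t) · ∂_t u(x,t) = 0 for all (x,t). Then for all a < t₁ < t₂ < b, ∫_{ℝⁿ} ( |∇u|² − ε |∂_t u|² )(x, t₁) dx − ∫_{ℝⁿ} ( |∇u|² − ε |∂_t u|² )(x, t₂) dx = 2 ∫_{t₁}^{t₂} ∫_{ℝⁿ} |∂_t u(x,t)|² dx dt. -/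
open Set MeasureTheory
open scoped RealInnerProductSpace

/-- Time derivative `∂ₜ u (x,t)`. -/
noncomputable def pt {n : ℕ} {E : Type*} [NormedAddCommGroup E] [NormedSpace ℝ E]
    (u : EuclideanSpace ℝ (Fin n) → ℝ → E) (x : EuclideanSpace ℝ (Fin n)) (t : ℝ) : E :=
  deriv (fun s => u x s) t

/-- Second time derivative `∂²ₜ u (x,t)`. -/
noncomputable def ptt {n : ℕ} {E : Type*} [NormedAddCommGroup E] [NormedSpace ℝ E]
    (u : EuclideanSpace ℝ (Fin n) → ℝ → E) (x : EuclideanSpace ℝ (Fin n)) (t : ℝ) : E :=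
  pt (fun y s => pt u y s) x t

/-- Spatial partial derivative `∂_{xⱼ} u (x,t)`. -/
noncomputable def px {n : ℕ} {E : Type*} [NormedAddCommGroup E] [NormedSpace ℝ E]
    (u : EuclideanSpace ℝ (Fin n) → ℝ → E) (j : Fin n)
    (x : EuclideanSpace ℝ (Fin n)) (t : ℝ) : E :=
  fderiv ℝ (fun y => u y t) x (EuclideanSpace.single j 1)

/-- Spatial Laplacian `Δu (x,t) = Σⱼ ∂²u/∂xⱼ²`, applied componentwise. -/
noncomputable def lapv {n : ℕ} {E : Type*} [NormedAddCommGroup E] [NormedSpace ℝ E]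
    (u : EuclideanSpace ℝ (Fin n) → ℝ → E) (x : EuclideanSpace ℝ (Fin n)) (t : ℝ) : E :=
  ∑ j, px (fun y s => px u j y s) j x t

private lemma hasDerivAt_norm_sq_aux {V : Type*} [NormedAddCommGroup V] [InnerProductSpace ℝ V]
    {f : ℝ → V} {f' : V} {s : ℝ} (h : HasDerivAt f f' s) :
    HasDerivAt (fun t => ‖f t‖ ^ 2) (2 * ⟪f', f s⟫) s := by
  have h2 := HasDerivAt.inner ℝ h h
  have hfe : (fun t => (⟪f t, f t⟫ : ℝ)) = fun t => ‖f t‖ ^ 2 :=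
    funext fun t => real_inner_self_eq_norm_sq _
  rw [hfe] at h2
  have hc : ⟪f s, f'⟫ + ⟪f', f s⟫ = 2 * ⟪f', f s⟫ := by rw [two_mul, real_inner_comm]
  rw [hc] at h2
  exact h2

set_option maxHeartbeats 1000000 in
/-- Energy identity for the elliptic regularization. If
`F = −ε ∂²ₜ u + ∂ₜ u − Δu` is pointwise orthogonal to `∂ₜ u`, and `u ≡ Q` for `|x| ≥ M`,
then for all `a < t₁ < t₂ < b`,
`∫ (|∇u|² − ε|∂ₜu|²)(·,t₁) − ∫ (|∇u|² − ε|∂ₜu|²)(·,t₂) = 2 ∫_{t₁}^{t₂} ∫ |∂ₜu|²`. -/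
theorem stmt_10 (n L : ℕ) (hn : 1 ≤ n) (hL : 1 ≤ L) (ε : ℝ) (hε : 0 < ε)
    (Q : EuclideanSpace ℝ (Fin L)) (M : ℝ) (hM : 0 < M)
    (a b : ℝ) (ha : 0 ≤ a) (hab : a < b)
    (u : EuclideanSpace ℝ (Fin n) → ℝ → EuclideanSpace ℝ (Fin L))
    (hu : ContDiffOn ℝ (⊤ : ℕ∞)
      (fun p : EuclideanSpace ℝ (Fin n) × ℝ => u p.1 p.2) (univ ×ˢ Ioo a b))
    (hQ : ∀ x : EuclideanSpace ℝ (Fin n), ∀ t ∈ Ioo a b, M ≤ ‖x‖ → u x t = Q)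
    (horth : ∀ x : EuclideanSpace ℝ (Fin n), ∀ t ∈ Ioo a b,
      ⟪(-ε) • ptt u x t + pt u x t - lapv u x t, pt u x t⟫ = 0) :
    ∀ t₁ t₂ : ℝ, a < t₁ → t₁ < t₂ → t₂ < b →
      ((∫ x : EuclideanSpace ℝ (Fin n),
          ((∑ j, ‖px u j x t₁‖ ^ 2) - ε * ‖pt u x t₁‖ ^ 2))
        - ∫ x : EuclideanSpace ℝ (Fin n),
            ((∑ j, ‖px u j x t₂‖ ^ 2) - ε * ‖pt u x t₂‖ ^ 2))
      = 2 * ∫ t in Ioo t₁ t₂, ∫ x : EuclideanSpace ℝ (Fin n), ‖pt u x t‖ ^ 2 := by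
  intro t₁ t₂ ht₁ ht₁₂ ht₂
  classical
  have ht₁m : t₁ ∈ Ioo a b := ⟨ht₁, ht₁₂.trans ht₂⟩
  have ht₂m : t₂ ∈ Ioo a b := ⟨ht₁.trans ht₁₂, ht₂⟩
  set Ω : Set ((EuclideanSpace ℝ (Fin n)) × ℝ) := univ ×ˢ Ioo a b with hΩdef
  have hΩ : IsOpen Ω := isOpen_univ.prod isOpen_Ioo
  have hmem : ∀ (x : EuclideanSpace ℝ (Fin n)) (t : ℝ), t ∈ Ioo a b → (x, t) ∈ Ω := by
    intro x t ht; exact ⟨trivial, ht⟩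
  set U : (EuclideanSpace ℝ (Fin n)) × ℝ → EuclideanSpace ℝ (Fin L) :=
    fun p => u p.1 p.2 with hUdef
  have hu' : ContDiffOn ℝ (⊤ : ℕ∞) U Ω := hu
  set U' : (EuclideanSpace ℝ (Fin n)) × ℝ →
      ((EuclideanSpace ℝ (Fin n)) × ℝ) →L[ℝ] EuclideanSpace ℝ (Fin L) := fderiv ℝ U with hU'def
  set U'' := fderiv ℝ U' with hU''def
  have h1 := (contDiffOn_infty_iff_fderiv_of_isOpen hΩ).1 hu'
  have hUdOn : DifferentiableOn ℝ U Ω := h1.1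
  have h2 := (contDiffOn_infty_iff_fderiv_of_isOpen hΩ).1 h1.2
  have hU'dOn : DifferentiableOn ℝ U' Ω := h2.1
  have hU'cont : ContinuousOn U' Ω := h1.2.continuousOn
  have hU''cont : ContinuousOn U'' Ω := h2.2.continuousOn
  have hUd : ∀ p ∈ Ω, HasFDerivAt U (U' p) p := fun p hp =>
    (hUdOn.differentiableAt (hΩ.mem_nhds hp)).hasFDerivAt
  have hU'd : ∀ p ∈ Ω, HasFDerivAt U' (U'' p) p := fun p hp =>
    (hU'dOn.differentiableAt (hΩ.mem_nhds hp)).hasFDerivAt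
  have hsymm : ∀ p ∈ Ω, ∀ v w, U'' p v w = U'' p w v := by
    intro p hp v w
    exact second_derivative_symmetric_of_eventually
      (Filter.eventually_of_mem (hΩ.mem_nhds hp) (fun q hq => hUd q hq)) (hU'd p hp) v w
  -- vanishing outside the ball
  have hSopen : IsOpen {p : (EuclideanSpace ℝ (Fin n)) × ℝ | M < ‖p.1‖ ∧ p.2 ∈ Ioo a b} :=
    (isOpen_lt continuous_const (continuous_norm.comp continuous_fst)).inter
      (isOpen_Ioo.preimage continuous_snd)
  have hU'0 : ∀ p : (EuclideanSpace ℝ (Fin n)) × ℝ, M < ‖p.1‖ → p.2 ∈ Ioo a b → U' p = 0 := by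
    intro p h1p h2p
    have hev : U =ᶠ[nhds p] (fun _ => Q) :=
      Filter.eventually_of_mem (hSopen.mem_nhds ⟨h1p, h2p⟩)
        (fun q hq => hQ q.1 q.2 hq.2 hq.1.le)
    rw [hU'def, hev.fderiv_eq]
    exact fderiv_const_apply Q
  have hU''0 : ∀ p : (EuclideanSpace ℝ (Fin n)) × ℝ, M < ‖p.1‖ → p.2 ∈ Ioo a b → U'' p = 0 := by
    intro p h1p h2p
    have hev : U' =ᶠ[nhds p] (fun _ => (0 : _ →L[ℝ] EuclideanSpace ℝ (Fin L))) :=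
      Filter.eventually_of_mem (hSopen.mem_nhds ⟨h1p, h2p⟩)
        (fun q hq => hU'0 q hq.1 hq.2)
    rw [hU''def, hev.fderiv_eq]
    exact fderiv_const_apply _
  -- basic slice derivatives
  have hpt_has : ∀ (x : EuclideanSpace ℝ (Fin n)) (t : ℝ), t ∈ Ioo a b →
      HasDerivAt (fun s => u x s) (U' (x, t) (0, 1)) t := by
    intro x t ht
    exact (hUd (x, t) (hmem x t ht)).comp_hasDerivAt t
      ((hasDerivAt_const t x).prodMk (hasDerivAt_id t))
  have hpt_eq : ∀ (x : EuclideanSpace ℝ (Fin n)) (t : ℝ), t ∈ Ioo a b →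
      pt u x t = U' (x, t) (0, 1) := by
    intro x t ht
    exact (hpt_has x t ht).deriv
  have hpx_has : ∀ (x : EuclideanSpace ℝ (Fin n)) (t : ℝ), t ∈ Ioo a b →
      HasFDerivAt (fun y => u y t)
        ((U' (x, t)).comp (ContinuousLinearMap.inl ℝ (EuclideanSpace ℝ (Fin n)) ℝ)) x := by
    intro x t ht
    exact (hUd (x, t) (hmem x t ht)).comp x (hasFDerivAt_prodMk_left (𝕜 := ℝ) x t)
  have hpx_eq : ∀ (j : Fin n) (x : EuclideanSpace ℝ (Fin n)) (t : ℝ), t ∈ Ioo a b →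
      px u j x t = U' (x, t) (EuclideanSpace.single j 1, 0) := by
    intro j x t ht
    show fderiv ℝ (fun y => u y t) x (EuclideanSpace.single j 1) = _
    rw [(hpx_has x t ht).fderiv]
    rfl
  -- derivatives of the first derivatives
  have hW1d : ∀ (v : (EuclideanSpace ℝ (Fin n)) × ℝ), ∀ p ∈ Ω,
      HasFDerivAt (fun q => U' q v)
        ((ContinuousLinearMap.apply ℝ (EuclideanSpace ℝ (Fin L)) v).comp (U'' p)) p := by
    intro v p hp
    exact (ContinuousLinearMap.apply ℝ (EuclideanSpace ℝ (Fin L)) v).hasFDerivAt.comp p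
      (hU'd p hp)
  have hW1t : ∀ (v : (EuclideanSpace ℝ (Fin n)) × ℝ) (x : EuclideanSpace ℝ (Fin n)) (t : ℝ),
      t ∈ Ioo a b → HasDerivAt (fun s => U' (x, s) v) (U'' (x, t) (0, 1) v) t := by
    intro v x t ht
    have h := (hW1d v (x, t) (hmem x t ht)).comp_hasDerivAt t
      ((hasDerivAt_const t x).prodMk (hasDerivAt_id t))
    exact h
  have hW1x : ∀ (v : (EuclideanSpace ℝ (Fin n)) × ℝ) (x : EuclideanSpace ℝ (Fin n)) (t : ℝ),
      t ∈ Ioo a b → HasFDerivAt (fun y => U' (y, t) v)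
        (((ContinuousLinearMap.apply ℝ (EuclideanSpace ℝ (Fin L)) v).comp (U'' (x, t))).comp
          (ContinuousLinearMap.inl ℝ (EuclideanSpace ℝ (Fin n)) ℝ)) x := by
    intro v x t ht
    exact (hW1d v (x, t) (hmem x t ht)).comp x (hasFDerivAt_prodMk_left (𝕜 := ℝ) x t)
  have hptt_has : ∀ (x : EuclideanSpace ℝ (Fin n)) (t : ℝ), t ∈ Ioo a b →
      HasDerivAt (fun s => pt u x s) (U'' (x, t) (0, 1) (0, 1)) t := by
    intro x t ht
    refine (hW1t (0, 1) x t ht).congr_of_eventuallyEq ?_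
    filter_upwards [isOpen_Ioo.eventually_mem ht] with s hs
    exact hpt_eq x s hs
  have hptt_eq : ∀ (x : EuclideanSpace ℝ (Fin n)) (t : ℝ), t ∈ Ioo a b →
      ptt u x t = U'' (x, t) (0, 1) (0, 1) := by
    intro x t ht
    exact (hptt_has x t ht).deriv
  have hptpx_has : ∀ (j : Fin n) (x : EuclideanSpace ℝ (Fin n)) (t : ℝ), t ∈ Ioo a b →
      HasDerivAt (fun s => px u j x s) (U'' (x, t) (0, 1) (EuclideanSpace.single j 1, 0)) t := by
    intro j x t ht
    refine (hW1t (EuclideanSpace.single j 1, 0) x t ht).congr_of_eventuallyEq ?_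
    filter_upwards [isOpen_Ioo.eventually_mem ht] with s hs
    exact hpx_eq j x s hs
  have hpxpx_eq : ∀ (j : Fin n) (x : EuclideanSpace ℝ (Fin n)) (t : ℝ), t ∈ Ioo a b →
      px (fun y s => px u j y s) j x t
        = U'' (x, t) (EuclideanSpace.single j 1, 0) (EuclideanSpace.single j 1, 0) := by
    intro j x t ht
    have hfe : (fun y => px u j y t) = fun y => U' (y, t) (EuclideanSpace.single j 1, 0) :=
      funext fun y => hpx_eq j y t ht
    show fderiv ℝ (fun y => px u j y t) x (EuclideanSpace.single j 1) = _
    rw [hfe, (hW1x (EuclideanSpace.single j 1, 0) x t ht).fderiv]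
    rfl
  have hlap_eq : ∀ (x : EuclideanSpace ℝ (Fin n)) (t : ℝ), t ∈ Ioo a b →
      lapv u x t = ∑ j, U'' (x, t) (EuclideanSpace.single j 1, 0)
        (EuclideanSpace.single j 1, 0) := by
    intro x t ht
    show (∑ j, px (fun y s => px u j y s) j x t) = _
    exact Finset.sum_congr rfl fun j _ => hpxpx_eq j x t ht
  -- continuity of slice functions and integrability helper
  have hCU' : ∀ v, ContinuousOn (fun p => U' p v) Ω := fun v =>
    (ContinuousLinearMap.apply ℝ (EuclideanSpace ℝ (Fin L)) v).continuous.comp_continuousOn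
      hU'cont
  have hCU'' : ∀ v w, ContinuousOn (fun p => U'' p v w) Ω := fun v w =>
    ((ContinuousLinearMap.apply ℝ (EuclideanSpace ℝ (Fin L)) w).continuous.comp
      (ContinuousLinearMap.apply ℝ
        (((EuclideanSpace ℝ (Fin n)) × ℝ) →L[ℝ] EuclideanSpace ℝ (Fin L)) v).continuous
        ).comp_continuousOn hU''cont
  have key : ∀ f : (EuclideanSpace ℝ (Fin n)) × ℝ → ℝ, ContinuousOn f Ω →
      (∀ p : (EuclideanSpace ℝ (Fin n)) × ℝ, M < ‖p.1‖ → p.2 ∈ Ioo a b → f p = 0) →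
      ∀ t ∈ Ioo a b, Continuous (fun x => f (x, t)) ∧ Integrable (fun x => f (x, t)) := by
    intro f hc h0 t ht
    have hcont : Continuous fun x => f (x, t) :=
      hc.comp_continuous (continuous_id.prodMk continuous_const) (fun x => hmem x t ht)
    refine ⟨hcont, hcont.integrable_of_hasCompactSupport
      (HasCompactSupport.intro (isCompact_closedBall (0 : EuclideanSpace ℝ (Fin n)) M) ?_)⟩
    intro x hx
    have hxM : M < ‖x‖ := by
      simpa [Metric.mem_closedBall, dist_zero_right, not_le] using hx
    exact h0 (x, t) hxM ht

  -- concrete integrands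
  have hIA := fun j : Fin n => key
    (fun p => (⟪U'' p (0, 1) (EuclideanSpace.single j 1, 0),
        U' p (EuclideanSpace.single j 1, 0)⟫ : ℝ))
    ((hCU'' _ _).inner (hCU' _))
    (by intro p h1p h2p; simp [hU''0 p h1p h2p, hU'0 p h1p h2p])
  have hIB := fun j : Fin n => key
    (fun p => (⟪U'' p (EuclideanSpace.single j 1, 0) (EuclideanSpace.single j 1, 0),
        U' p (0, 1)⟫ : ℝ))
    ((hCU'' _ _).inner (hCU' _))
    (by intro p h1p h2p; simp [hU''0 p h1p h2p, hU'0 p h1p h2p])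
  have hIBA := fun j : Fin n => key
    (fun p => (⟪U'' p (EuclideanSpace.single j 1, 0) (0, 1),
        U' p (EuclideanSpace.single j 1, 0)⟫ : ℝ))
    ((hCU'' _ _).inner (hCU' _))
    (by intro p h1p h2p; simp [hU''0 p h1p h2p, hU'0 p h1p h2p])
  have hIfg := fun j : Fin n => key
    (fun p => (⟪U' p (0, 1), U' p (EuclideanSpace.single j 1, 0)⟫ : ℝ))
    ((hCU' _).inner (hCU' _))
    (by intro p h1p h2p; simp [hU'0 p h1p h2p])
  have hIfg' := fun j : Fin n => key
    (fun p => (⟪U' p (0, 1),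
        U'' p (EuclideanSpace.single j 1, 0) (EuclideanSpace.single j 1, 0)⟫ : ℝ))
    ((hCU' _).inner (hCU'' _ _))
    (by intro p h1p h2p; simp [hU''0 p h1p h2p, hU'0 p h1p h2p])
  have hIg3 := key (fun p => ‖U' p (0, 1)‖ ^ 2)
    (((hCU' _).norm).pow 2)
    (by intro p h1p h2p; simp [hU'0 p h1p h2p])
  have hIg1 := key
    (fun p => (∑ j, ‖U' p (EuclideanSpace.single j 1, 0)‖ ^ 2) - ε * ‖U' p (0, 1)‖ ^ 2)
    ((continuousOn_finset_sum _ fun j _ => ((hCU' _).norm).pow 2).sub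
      (continuousOn_const.mul (((hCU' _).norm).pow 2)))
    (by intro p h1p h2p; simp [hU'0 p h1p h2p])
  have hIg2 := key
    (fun p => (∑ j, 2 * ⟪U'' p (0, 1) (EuclideanSpace.single j 1, 0),
          U' p (EuclideanSpace.single j 1, 0)⟫)
        - ε * (2 * ⟪U'' p (0, 1) (0, 1), U' p (0, 1)⟫))
    ((continuousOn_finset_sum _ fun j _ =>
        continuousOn_const.mul ((hCU'' _ _).inner (hCU' _))).sub
      (continuousOn_const.mul (continuousOn_const.mul ((hCU'' _ _).inner (hCU' _)))))
    (by intro p h1p h2p; simp [hU''0 p h1p h2p, hU'0 p h1p h2p])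
  -- integration by parts in space
  have hIBP : ∀ (j : Fin n) (t : ℝ), t ∈ Ioo a b →
      (∫ x, (⟪U'' (x, t) (EuclideanSpace.single j 1, 0) (EuclideanSpace.single j 1, 0),
          U' (x, t) (0, 1)⟫ : ℝ))
      = - ∫ x, (⟪U'' (x, t) (0, 1) (EuclideanSpace.single j 1, 0),
          U' (x, t) (EuclideanSpace.single j 1, 0)⟫ : ℝ) := by
    intro j t ht
    have eL : (fun x : EuclideanSpace ℝ (Fin n) =>
        (innerSL ℝ (U' (x, t) (0, 1)))
          ((((ContinuousLinearMap.apply ℝ (EuclideanSpace ℝ (Fin L))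
              (EuclideanSpace.single j 1, (0 : ℝ))).comp (U'' (x, t))).comp
              (ContinuousLinearMap.inl ℝ (EuclideanSpace ℝ (Fin n)) ℝ))
            (EuclideanSpace.single j 1)))
        = fun x => (⟪U'' (x, t) (EuclideanSpace.single j 1, 0) (EuclideanSpace.single j 1, 0),
            U' (x, t) (0, 1)⟫ : ℝ) := by
      funext x
      simp only [ContinuousLinearMap.coe_comp', Function.comp_apply,
        ContinuousLinearMap.apply_apply, ContinuousLinearMap.inl_apply, innerSL_apply_apply]
      exact real_inner_comm _ _
    have eR : (fun x : EuclideanSpace ℝ (Fin n) =>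
        (innerSL ℝ
          ((((ContinuousLinearMap.apply ℝ (EuclideanSpace ℝ (Fin L))
              ((0 : EuclideanSpace ℝ (Fin n)), (1 : ℝ))).comp (U'' (x, t))).comp
              (ContinuousLinearMap.inl ℝ (EuclideanSpace ℝ (Fin n)) ℝ))
            (EuclideanSpace.single j 1)))
          (U' (x, t) (EuclideanSpace.single j 1, 0)))
        = fun x => (⟪U'' (x, t) (0, 1) (EuclideanSpace.single j 1, 0),
            U' (x, t) (EuclideanSpace.single j 1, 0)⟫ : ℝ) := by
      funext x
      simp only [ContinuousLinearMap.coe_comp', Function.comp_apply,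
        ContinuousLinearMap.apply_apply, ContinuousLinearMap.inl_apply, innerSL_apply_apply]
      rw [hsymm (x, t) (hmem x t ht)]
    have e0 : (fun x : EuclideanSpace ℝ (Fin n) =>
        (innerSL ℝ (U' (x, t) (0, 1))) (U' (x, t) (EuclideanSpace.single j 1, 0)))
        = fun x => (⟪U' (x, t) (0, 1), U' (x, t) (EuclideanSpace.single j 1, 0)⟫ : ℝ) := by
      funext x
      simp only [innerSL_apply_apply]
    have hmain := integral_bilinear_hasFDerivAt_right_eq_neg_left_of_integrable
      (μ := (volume : Measure (EuclideanSpace ℝ (Fin n))))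
      (B := (innerSL ℝ :
        EuclideanSpace ℝ (Fin L) →L[ℝ] EuclideanSpace ℝ (Fin L) →L[ℝ] ℝ))
      (v := EuclideanSpace.single j 1)
      (f := fun y => U' (y, t) (0, 1))
      (f' := fun x => ((ContinuousLinearMap.apply ℝ (EuclideanSpace ℝ (Fin L))
          ((0 : EuclideanSpace ℝ (Fin n)), (1 : ℝ))).comp (U'' (x, t))).comp
          (ContinuousLinearMap.inl ℝ (EuclideanSpace ℝ (Fin n)) ℝ))
      (g := fun y => U' (y, t) (EuclideanSpace.single j 1, 0))
      (g' := fun x => ((ContinuousLinearMap.apply ℝ (EuclideanSpace ℝ (Fin L))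
          (EuclideanSpace.single j 1, (0 : ℝ))).comp (U'' (x, t))).comp
          (ContinuousLinearMap.inl ℝ (EuclideanSpace ℝ (Fin n)) ℝ))
      (by rw [eR]; exact (hIA j t ht).2)
      (by rw [eL]; exact (hIB j t ht).2)
      (by rw [e0]; exact (hIfg j t ht).2)
      (fun x _ => hW1x ((0 : EuclideanSpace ℝ (Fin n)), (1 : ℝ)) x t ht)
      (fun x _ => hW1x (EuclideanSpace.single j 1, (0 : ℝ)) x t ht)
    rw [eL, eR] at hmain
    exact hmain

  -- rearranged orthogonality
  have horth' : ∀ (x : EuclideanSpace ℝ (Fin n)) (t : ℝ), t ∈ Ioo a b →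
      ε * (2 * ⟪U'' (x, t) (0, 1) (0, 1), U' (x, t) (0, 1)⟫)
        = 2 * (‖U' (x, t) (0, 1)‖ ^ 2
          - ∑ j, ⟪U'' (x, t) (EuclideanSpace.single j 1, 0) (EuclideanSpace.single j 1, 0),
              U' (x, t) (0, 1)⟫) := by
    intro x t ht
    have h := horth x t ht
    rw [hptt_eq x t ht, hpt_eq x t ht, hlap_eq x t ht] at h
    rw [inner_sub_left, inner_add_left, real_inner_smul_left, sum_inner,
      real_inner_self_eq_norm_sq] at h
    nlinarith [h]
  have hg2point : ∀ (x : EuclideanSpace ℝ (Fin n)) (t : ℝ), t ∈ Ioo a b →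
      ((∑ j, 2 * ⟪U'' (x, t) (0, 1) (EuclideanSpace.single j 1, 0),
            U' (x, t) (EuclideanSpace.single j 1, 0)⟫)
          - ε * (2 * ⟪U'' (x, t) (0, 1) (0, 1), U' (x, t) (0, 1)⟫))
        = (∑ j, (2 * ⟪U'' (x, t) (0, 1) (EuclideanSpace.single j 1, 0),
              U' (x, t) (EuclideanSpace.single j 1, 0)⟫
            + 2 * ⟪U'' (x, t) (EuclideanSpace.single j 1, 0) (EuclideanSpace.single j 1, 0),
              U' (x, t) (0, 1)⟫))
          - 2 * ‖U' (x, t) (0, 1)‖ ^ 2 := by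
    intro x t ht
    rw [horth' x t ht]
    simp only [Finset.sum_add_distrib, ← Finset.mul_sum]
    ring
  -- value of the derivative integral
  have hval : ∀ (t : ℝ), t ∈ Ioo a b →
      (∫ x : EuclideanSpace ℝ (Fin n),
          ((∑ j, 2 * ⟪U'' (x, t) (0, 1) (EuclideanSpace.single j 1, 0),
            U' (x, t) (EuclideanSpace.single j 1, 0)⟫)
          - ε * (2 * ⟪U'' (x, t) (0, 1) (0, 1), U' (x, t) (0, 1)⟫)))
        = -2 * ∫ x : EuclideanSpace ℝ (Fin n), ‖U' (x, t) (0, 1)‖ ^ 2 := by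
    intro t ht
    have hfe : (fun x : EuclideanSpace ℝ (Fin n) =>
        ((∑ j, 2 * ⟪U'' (x, t) (0, 1) (EuclideanSpace.single j 1, 0),
            U' (x, t) (EuclideanSpace.single j 1, 0)⟫)
          - ε * (2 * ⟪U'' (x, t) (0, 1) (0, 1), U' (x, t) (0, 1)⟫)))
        = fun x =>
          (∑ j, (2 * ⟪U'' (x, t) (0, 1) (EuclideanSpace.single j 1, 0),
              U' (x, t) (EuclideanSpace.single j 1, 0)⟫
            + 2 * ⟪U'' (x, t) (EuclideanSpace.single j 1, 0) (EuclideanSpace.single j 1, 0),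
              U' (x, t) (0, 1)⟫))
          - 2 * ‖U' (x, t) (0, 1)‖ ^ 2 := funext fun x => hg2point x t ht
    rw [hfe]
    have hg3int : Integrable (fun x : EuclideanSpace ℝ (Fin n) =>
        ‖U' (x, t) (0, 1)‖ ^ 2) volume := (hIg3 t ht).2
    have hint1 : ∀ j : Fin n, Integrable (fun x : EuclideanSpace ℝ (Fin n) =>
        2 * ⟪U'' (x, t) (0, 1) (EuclideanSpace.single j 1, 0),
            U' (x, t) (EuclideanSpace.single j 1, 0)⟫
        + 2 * ⟪U'' (x, t) (EuclideanSpace.single j 1, 0) (EuclideanSpace.single j 1, 0),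
            U' (x, t) (0, 1)⟫) volume :=
      fun j => ((hIA j t ht).2.const_mul 2).add ((hIB j t ht).2.const_mul 2)
    rw [integral_sub (integrable_finset_sum _ fun j _ => hint1 j) (hg3int.const_mul 2)]
    rw [integral_finset_sum _ fun j _ => hint1 j]
    have hzero : ∀ j ∈ (Finset.univ : Finset (Fin n)),
        (∫ x : EuclideanSpace ℝ (Fin n),
          (2 * ⟪U'' (x, t) (0, 1) (EuclideanSpace.single j 1, 0),
              U' (x, t) (EuclideanSpace.single j 1, 0)⟫
          + 2 * ⟪U'' (x, t) (EuclideanSpace.single j 1, 0) (EuclideanSpace.single j 1, 0),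
              U' (x, t) (0, 1)⟫)) = 0 := by
      intro j _
      rw [integral_add ((hIA j t ht).2.const_mul 2) ((hIB j t ht).2.const_mul 2),
        integral_const_mul, integral_const_mul, hIBP j t ht]
      ring
    rw [Finset.sum_eq_zero hzero, integral_const_mul]
    ring
  -- identification of the integrand at fixed time
  have hFg1 : ∀ (t : ℝ), t ∈ Ioo a b →
      (fun x : EuclideanSpace ℝ (Fin n) => (∑ j, ‖px u j x t‖ ^ 2) - ε * ‖pt u x t‖ ^ 2)
        = fun x => (∑ j, ‖U' (x, t) (EuclideanSpace.single j 1, 0)‖ ^ 2)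
            - ε * ‖U' (x, t) (0, 1)‖ ^ 2 := by
    intro t ht
    funext x
    rw [hpt_eq x t ht]
    congr 1
    exact Finset.sum_congr rfl fun j _ => by rw [hpx_eq j x t ht]
  -- differentiation under the integral sign
  have hG : ∀ (t₀ : ℝ), t₀ ∈ Ioo a b →
      HasDerivAt (fun t => ∫ x : EuclideanSpace ℝ (Fin n),
          ((∑ j, ‖px u j x t‖ ^ 2) - ε * ‖pt u x t‖ ^ 2))
        (-2 * ∫ x : EuclideanSpace ℝ (Fin n), ‖U' (x, t₀) (0, 1)‖ ^ 2) t₀ := by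
    intro t₀ ht₀
    set δ : ℝ := min (t₀ - a) (b - t₀) / 2 with hδdef
    have hδpos : 0 < δ := half_pos (lt_min (sub_pos.2 ht₀.1) (sub_pos.2 ht₀.2))
    have hδa : δ < t₀ - a := by
      have h1 := min_le_left (t₀ - a) (b - t₀)
      have h2 : 0 < t₀ - a := sub_pos.2 ht₀.1
      rw [hδdef]; linarith
    have hδb : δ < b - t₀ := by
      have h1 := min_le_right (t₀ - a) (b - t₀)
      have h2 : 0 < b - t₀ := sub_pos.2 ht₀.2
      rw [hδdef]; linarith
    have hball : ∀ s ∈ Metric.closedBall t₀ δ, s ∈ Ioo a b := by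
      intro s hs
      rw [Metric.mem_closedBall, Real.dist_eq] at hs
      have h3 := abs_le.1 hs
      exact ⟨by linarith [h3.1], by linarith [h3.2]⟩
    have hK : IsCompact ((Metric.closedBall (0 : EuclideanSpace ℝ (Fin n)) M) ×ˢ
        (Metric.closedBall t₀ δ)) := (isCompact_closedBall _ _).prod (isCompact_closedBall _ _)
    have hKsub : ((Metric.closedBall (0 : EuclideanSpace ℝ (Fin n)) M) ×ˢ
        (Metric.closedBall t₀ δ)) ⊆ Ω := by
      rintro ⟨x, s⟩ ⟨-, hs⟩
      exact hmem x s (hball s hs)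
    have hCg2 : ContinuousOn (fun p : (EuclideanSpace ℝ (Fin n)) × ℝ =>
        (∑ j, 2 * ⟪U'' p (0, 1) (EuclideanSpace.single j 1, 0),
            U' p (EuclideanSpace.single j 1, 0)⟫)
          - ε * (2 * ⟪U'' p (0, 1) (0, 1), U' p (0, 1)⟫)) Ω :=
      ((continuousOn_finset_sum _ fun j _ =>
          continuousOn_const.mul ((hCU'' _ _).inner (hCU' _))).sub
        (continuousOn_const.mul (continuousOn_const.mul ((hCU'' _ _).inner (hCU' _)))))
    obtain ⟨C, hC⟩ := hK.exists_bound_of_continuousOn (hCg2.mono hKsub)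
    have hbound_int : Integrable ((Metric.closedBall (0 : EuclideanSpace ℝ (Fin n)) M).indicator
        (fun _ => C)) volume :=
      (integrableOn_const measure_closedBall_lt_top.ne).integrable_indicator
        measurableSet_closedBall
    have hmeas : ∀ᶠ s in nhds t₀, AEStronglyMeasurable
        (fun x : EuclideanSpace ℝ (Fin n) =>
          (∑ j, ‖px u j x s‖ ^ 2) - ε * ‖pt u x s‖ ^ 2) volume := by
      filter_upwards [isOpen_Ioo.eventually_mem ht₀] with s hs
      rw [hFg1 s hs]
      exact (hIg1 s hs).1.aestronglyMeasurable
    have hint : Integrable (fun x : EuclideanSpace ℝ (Fin n) =>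
        (∑ j, ‖px u j x t₀‖ ^ 2) - ε * ‖pt u x t₀‖ ^ 2) volume := by
      rw [hFg1 t₀ ht₀]
      exact (hIg1 t₀ ht₀).2
    have hmeas' : AEStronglyMeasurable
        (fun x : EuclideanSpace ℝ (Fin n) =>
          (∑ j, 2 * ⟪U'' (x, t₀) (0, 1) (EuclideanSpace.single j 1, 0),
            U' (x, t₀) (EuclideanSpace.single j 1, 0)⟫)
          - ε * (2 * ⟪U'' (x, t₀) (0, 1) (0, 1), U' (x, t₀) (0, 1)⟫)) volume :=
      (hIg2 t₀ ht₀).1.aestronglyMeasurable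
    have hbound : ∀ᵐ x : EuclideanSpace ℝ (Fin n) ∂volume, ∀ s ∈ Metric.ball t₀ δ,
        ‖(∑ j, 2 * ⟪U'' (x, s) (0, 1) (EuclideanSpace.single j 1, 0),
            U' (x, s) (EuclideanSpace.single j 1, 0)⟫)
          - ε * (2 * ⟪U'' (x, s) (0, 1) (0, 1), U' (x, s) (0, 1)⟫)‖
          ≤ (Metric.closedBall (0 : EuclideanSpace ℝ (Fin n)) M).indicator (fun _ => C) x := by
      refine Filter.Eventually.of_forall (fun x s hs => ?_)
      have hs' : s ∈ Ioo a b := hball s (Metric.ball_subset_closedBall hs)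
      by_cases hx : x ∈ Metric.closedBall (0 : EuclideanSpace ℝ (Fin n)) M
      · rw [Set.indicator_of_mem hx]
        exact hC (x, s) ⟨hx, Metric.ball_subset_closedBall hs⟩
      · rw [Set.indicator_of_notMem hx]
        have hxM : M < ‖x‖ := by
          simpa [Metric.mem_closedBall, dist_zero_right, not_le] using hx
        have hz : ((∑ j, 2 * ⟪U'' (x, s) (0, 1) (EuclideanSpace.single j 1, 0),
            U' (x, s) (EuclideanSpace.single j 1, 0)⟫)
          - ε * (2 * ⟪U'' (x, s) (0, 1) (0, 1), U' (x, s) (0, 1)⟫)) = 0 := by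
          simp [hU''0 (x, s) hxM hs', hU'0 (x, s) hxM hs']
        rw [hz]
        simp
    have hdiff : ∀ᵐ x : EuclideanSpace ℝ (Fin n) ∂volume, ∀ s ∈ Metric.ball t₀ δ,
        HasDerivAt (fun t => (∑ j, ‖px u j x t‖ ^ 2) - ε * ‖pt u x t‖ ^ 2)
          ((∑ j, 2 * ⟪U'' (x, s) (0, 1) (EuclideanSpace.single j 1, 0),
            U' (x, s) (EuclideanSpace.single j 1, 0)⟫)
          - ε * (2 * ⟪U'' (x, s) (0, 1) (0, 1), U' (x, s) (0, 1)⟫)) s := by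
      refine Filter.Eventually.of_forall (fun x s hs => ?_)
      have hs' : s ∈ Ioo a b := hball s (Metric.ball_subset_closedBall hs)
      have hsum : HasDerivAt (fun r => ∑ j, ‖px u j x r‖ ^ 2)
          (∑ j, 2 * ⟪U'' (x, s) (0, 1) (EuclideanSpace.single j 1, 0),
            U' (x, s) (EuclideanSpace.single j 1, 0)⟫) s := by
        refine HasDerivAt.fun_sum (fun j _ => ?_)
        have hj := hasDerivAt_norm_sq_aux (hptpx_has j x s hs')
        rwa [hpx_eq j x s hs'] at hj
      have hpt2 : HasDerivAt (fun r => ‖pt u x r‖ ^ 2)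
          (2 * ⟪U'' (x, s) (0, 1) (0, 1), U' (x, s) (0, 1)⟫) s := by
        have hj := hasDerivAt_norm_sq_aux (hptt_has x s hs')
        rwa [hpt_eq x s hs'] at hj
      exact hsum.sub (hpt2.const_mul ε)
    have hmain := hasDerivAt_integral_of_dominated_loc_of_deriv_le
      (μ := (volume : Measure (EuclideanSpace ℝ (Fin n)))) (x₀ := t₀)
      (F := fun t x => (∑ j, ‖px u j x t‖ ^ 2) - ε * ‖pt u x t‖ ^ 2)
      (F' := fun s x => (∑ j, 2 * ⟪U'' (x, s) (0, 1) (EuclideanSpace.single j 1, 0),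
            U' (x, s) (EuclideanSpace.single j 1, 0)⟫)
          - ε * (2 * ⟪U'' (x, s) (0, 1) (0, 1), U' (x, s) (0, 1)⟫))
      (bound := (Metric.closedBall (0 : EuclideanSpace ℝ (Fin n)) M).indicator (fun _ => C))
      (Metric.ball_mem_nhds t₀ hδpos) hmeas hint hmeas' hbound hbound_int hdiff
    have h2' := hmain.2
    rwa [hval t₀ ht₀] at h2'
  -- continuity of the energy dissipation in time
  have hRcont : ∀ (t₀ : ℝ), t₀ ∈ Ioo a b →
      ContinuousAt (fun t => ∫ x : EuclideanSpace ℝ (Fin n), ‖U' (x, t) (0, 1)‖ ^ 2) t₀ := by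
    intro t₀ ht₀
    set δ : ℝ := min (t₀ - a) (b - t₀) / 2 with hδdef
    have hδpos : 0 < δ := half_pos (lt_min (sub_pos.2 ht₀.1) (sub_pos.2 ht₀.2))
    have hδa : δ < t₀ - a := by
      have h1 := min_le_left (t₀ - a) (b - t₀)
      have h2 : 0 < t₀ - a := sub_pos.2 ht₀.1
      rw [hδdef]; linarith
    have hδb : δ < b - t₀ := by
      have h1 := min_le_right (t₀ - a) (b - t₀)
      have h2 : 0 < b - t₀ := sub_pos.2 ht₀.2
      rw [hδdef]; linarith
    have hball : ∀ s ∈ Metric.closedBall t₀ δ, s ∈ Ioo a b := by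
      intro s hs
      rw [Metric.mem_closedBall, Real.dist_eq] at hs
      have h3 := abs_le.1 hs
      exact ⟨by linarith [h3.1], by linarith [h3.2]⟩
    have hK : IsCompact ((Metric.closedBall (0 : EuclideanSpace ℝ (Fin n)) M) ×ˢ
        (Metric.closedBall t₀ δ)) := (isCompact_closedBall _ _).prod (isCompact_closedBall _ _)
    have hKsub : ((Metric.closedBall (0 : EuclideanSpace ℝ (Fin n)) M) ×ˢ
        (Metric.closedBall t₀ δ)) ⊆ Ω := by
      rintro ⟨x, s⟩ ⟨-, hs⟩
      exact hmem x s (hball s hs)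
    have hCg3 : ContinuousOn (fun p : (EuclideanSpace ℝ (Fin n)) × ℝ =>
        ‖U' p (0, 1)‖ ^ 2) Ω := ((hCU' _).norm).pow 2
    obtain ⟨C, hC⟩ := hK.exists_bound_of_continuousOn (hCg3.mono hKsub)
    have hbound_int : Integrable ((Metric.closedBall (0 : EuclideanSpace ℝ (Fin n)) M).indicator
        (fun _ => C)) volume :=
      (integrableOn_const measure_closedBall_lt_top.ne).integrable_indicator
        measurableSet_closedBall
    refine continuousAt_of_dominated ?_ ?_ hbound_int ?_
    · filter_upwards [isOpen_Ioo.eventually_mem ht₀] with s hs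
      exact (hIg3 s hs).1.aestronglyMeasurable
    · filter_upwards [Metric.closedBall_mem_nhds t₀ hδpos] with s hs
      refine Filter.Eventually.of_forall (fun x => ?_)
      by_cases hx : x ∈ Metric.closedBall (0 : EuclideanSpace ℝ (Fin n)) M
      · rw [Set.indicator_of_mem hx]
        exact hC (x, s) ⟨hx, hs⟩
      · rw [Set.indicator_of_notMem hx]
        have hxM : M < ‖x‖ := by
          simpa [Metric.mem_closedBall, dist_zero_right, not_le] using hx
        have hs' : s ∈ Ioo a b := hball s hs
        have hz : ‖U' (x, s) (0, 1)‖ ^ 2 = 0 := by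
          simp [hU'0 (x, s) hxM hs']
        rw [hz]
        simp
    · refine Filter.Eventually.of_forall (fun x => ?_)
      exact (hasDerivAt_norm_sq_aux (hW1t (0, 1) x t₀ ht₀)).continuousAt
  -- final assembly via FTC
  have hIoo2 : (∫ t in Ioo t₁ t₂, ∫ x : EuclideanSpace ℝ (Fin n), ‖pt u x t‖ ^ 2)
      = ∫ t in Ioo t₁ t₂, ∫ x : EuclideanSpace ℝ (Fin n), ‖U' (x, t) (0, 1)‖ ^ 2 := by
    refine setIntegral_congr_fun measurableSet_Ioo (fun s hs => ?_)
    have hs' : s ∈ Ioo a b := ⟨ht₁.trans hs.1, hs.2.trans ht₂⟩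
    have hfe : (fun x : EuclideanSpace ℝ (Fin n) => ‖pt u x s‖ ^ 2)
        = fun x => ‖U' (x, s) (0, 1)‖ ^ 2 := funext fun x => by rw [hpt_eq x s hs']
    simp only [hfe]
  have hsub2 : Icc t₁ t₂ ⊆ Ioo a b :=
    fun s hs => ⟨lt_of_lt_of_le ht₁ hs.1, lt_of_le_of_lt hs.2 ht₂⟩
  have huIcc : uIcc t₁ t₂ = Icc t₁ t₂ := uIcc_of_le ht₁₂.le
  have hRc : ContinuousOn (fun t => -2 * ∫ x : EuclideanSpace ℝ (Fin n),
      ‖U' (x, t) (0, 1)‖ ^ 2) (uIcc t₁ t₂) := by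
    rw [huIcc]
    exact continuousOn_const.mul (fun s hs => (hRcont s (hsub2 hs)).continuousWithinAt)
  have hFTC := intervalIntegral.integral_eq_sub_of_hasDerivAt
      (f := fun t => ∫ x : EuclideanSpace ℝ (Fin n),
        ((∑ j, ‖px u j x t‖ ^ 2) - ε * ‖pt u x t‖ ^ 2))
      (f' := fun t => -2 * ∫ x : EuclideanSpace ℝ (Fin n), ‖U' (x, t) (0, 1)‖ ^ 2)
      (fun s hs => hG s (hsub2 (huIcc ▸ hs)))
      (hRc.intervalIntegrable)
  rw [intervalIntegral.integral_const_mul, intervalIntegral.integral_of_le ht₁₂.le,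
    integral_Ioc_eq_integral_Ioo] at hFTC
  rw [hIoo2]
  linarith [hFTC]
end

section
/- Let n, L ≥ 1, ε > 0, and let u : ℝⁿ × ℝ → ℝ^L be smooth. Define the energy density e_ε(u) = (ε/2)|∂_t u|² + (1/2)|∇u|², and set F := −ε ∂²_t u − Δu + ∂_t u. Then at every point of ℝⁿ × ℝ one has the Bochner-type identity −ε ∂²_t e_ε(u) − Δ e_ε(u) + ∂_t e_ε(u) = Σ_{j=1}^n ∂_{x_j} F · ∂_{x_j} u + ε ∂_t F · ∂_t u − ( ε² |∂²_t u|² + 2ε Σ_{j=1}^n |∂_t ∂_{x_j} u|² + Σ_{j,k=1}^n |∂_{x_j} ∂_{x_k} u|² ). In particular, if F ≡ 0 on ℝⁿ × ℝ, then −ε ∂²_t e_ε(u) − Δ e_ε(u) + ∂_t e_ε(u) ≤ 0. -/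
open Set MeasureTheory
open scoped RealInnerProductSpace

section Aux
variable {H F' : Type*} [NormedAddCommGroup H] [NormedSpace ℝ H]
  [NormedAddCommGroup F'] [NormedSpace ℝ F']

/-- Directional derivative operator. -/
noncomputable def Dv (v : H) (g : H → F') : H → F' := fun p => fderiv ℝ g p v

lemma ContDiff.dv {g : H → F'} (hg : ContDiff ℝ (⊤ : ℕ∞) g) (v : H) :
    ContDiff ℝ (⊤ : ℕ∞) (Dv v g) :=
  (hg.fderiv_right (by exact_mod_cast le_rfl)).clm_apply contDiff_const

lemma ContDiff.diffAt {g : H → F'} (hg : ContDiff ℝ (⊤ : ℕ∞) g) (p : H) :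
    DifferentiableAt ℝ g p :=
  (hg.differentiable (by simp)).differentiableAt

lemma Dv_comm {g : H → F'} (hg : ContDiff ℝ (⊤ : ℕ∞) g) (a b : H) (p : H) :
    Dv a (Dv b g) p = Dv b (Dv a g) p := by
  have hd : ContDiff ℝ (⊤ : ℕ∞) (fderiv ℝ g) := hg.fderiv_right (by exact_mod_cast le_rfl)
  have hda : DifferentiableAt ℝ (fderiv ℝ g) p := hd.diffAt p
  have hcomp : ∀ c : H, fderiv ℝ (fun q => fderiv ℝ g q c) p
      = (ContinuousLinearMap.apply ℝ F' c).comp (fderiv ℝ (fderiv ℝ g) p) := fun c =>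
    ((ContinuousLinearMap.apply ℝ F' c).hasFDerivAt.comp p hda.hasFDerivAt).fderiv
  have h1 : Dv a (Dv b g) p = fderiv ℝ (fderiv ℝ g) p a b := by
    show fderiv ℝ (fun q => fderiv ℝ g q b) p a = _
    rw [hcomp b]; rfl
  have h2 : Dv b (Dv a g) p = fderiv ℝ (fderiv ℝ g) p b a := by
    show fderiv ℝ (fun q => fderiv ℝ g q a) p b = _
    rw [hcomp a]; rfl
  rw [h1, h2]
  exact second_derivative_symmetric (fun y => (hg.diffAt y).hasFDerivAt) hda.hasFDerivAt a b

lemma Dv_add {f g : H → F'} {p : H} (hf : DifferentiableAt ℝ f p) (hg : DifferentiableAt ℝ g p)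
    (a : H) : Dv a (fun q => f q + g q) p = Dv a f p + Dv a g p := by
  simp [Dv, fderiv_fun_add hf hg]

lemma Dv_sub {f g : H → F'} {p : H} (hf : DifferentiableAt ℝ f p) (hg : DifferentiableAt ℝ g p)
    (a : H) : Dv a (fun q => f q - g q) p = Dv a f p - Dv a g p := by
  simp [Dv, fderiv_fun_sub hf hg]

lemma Dv_smul {f : H → F'} {p : H} (hf : DifferentiableAt ℝ f p) (c : ℝ)
    (a : H) : Dv a (fun q => c • f q) p = c • Dv a f p := by
  simp [Dv, fderiv_fun_const_smul hf c]

lemma Dv_const_mul {f : H → ℝ} {p : H} (hf : DifferentiableAt ℝ f p) (c : ℝ)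
    (a : H) : Dv a (fun q => c * f q) p = c * Dv a f p := by
  simp [Dv, fderiv_const_mul hf c]

lemma Dv_sum {ι : Type*} {s : Finset ι} {f : ι → H → F'} {p : H}
    (hf : ∀ i ∈ s, DifferentiableAt ℝ (f i) p) (a : H) :
    Dv a (fun q => ∑ i ∈ s, f i q) p = ∑ i ∈ s, Dv a (f i) p := by
  simp [Dv, fderiv_fun_sum hf]

end Aux

section InnerAux
variable {H V : Type*} [NormedAddCommGroup H] [NormedSpace ℝ H]
  [NormedAddCommGroup V] [InnerProductSpace ℝ V]

lemma Dv_inner {f g : H → V} {p : H} (hf : DifferentiableAt ℝ f p)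
    (hg : DifferentiableAt ℝ g p) (a : H) :
    Dv a (fun q => ⟪f q, g q⟫) p = ⟪f p, Dv a g p⟫ + ⟪Dv a f p, g p⟫ := by
  simpa [Dv] using fderiv_inner_apply ℝ hf hg a

end InnerAux

section Curried
variable {n : ℕ} {E : Type*} [NormedAddCommGroup E] [NormedSpace ℝ E]

lemma pt_eq {u : EuclideanSpace ℝ (Fin n) → ℝ → E} {g : EuclideanSpace ℝ (Fin n) × ℝ → E}
    (h : ∀ y s, u y s = g (y, s)) (x : EuclideanSpace ℝ (Fin n)) (t : ℝ)
    (hg : DifferentiableAt ℝ g (x, t)) :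
    pt u x t = Dv ((0 : EuclideanSpace ℝ (Fin n)), (1 : ℝ)) g (x, t) := by
  have hc : HasDerivAt (fun s : ℝ => ((x, s) : EuclideanSpace ℝ (Fin n) × ℝ))
      ((0 : EuclideanSpace ℝ (Fin n)), (1 : ℝ)) t :=
    (hasDerivAt_const t x).prodMk (hasDerivAt_id t)
  have h2 : HasDerivAt (fun s : ℝ => g (x, s)) (fderiv ℝ g (x, t) (0, 1)) t :=
    hg.hasFDerivAt.comp_hasDerivAt t hc
  have he : (fun s => u x s) = fun s => g (x, s) := funext fun s => h x s
  rw [pt, he]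
  exact h2.deriv

lemma px_eq {u : EuclideanSpace ℝ (Fin n) → ℝ → E} {g : EuclideanSpace ℝ (Fin n) × ℝ → E}
    (h : ∀ y s, u y s = g (y, s)) (j : Fin n) (x : EuclideanSpace ℝ (Fin n)) (t : ℝ)
    (hg : DifferentiableAt ℝ g (x, t)) :
    px u j x t = Dv ((EuclideanSpace.single j 1 : EuclideanSpace ℝ (Fin n)), (0 : ℝ)) g (x, t) := by
  have hc : HasFDerivAt (fun y : EuclideanSpace ℝ (Fin n) => ((y, t) : EuclideanSpace ℝ (Fin n) × ℝ))
      ((ContinuousLinearMap.id ℝ (EuclideanSpace ℝ (Fin n))).prod 0) x :=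
    (hasFDerivAt_id x).prodMk (hasFDerivAt_const t x)
  have he : (fun y => u y t) = fun y => g (y, t) := funext fun y => h y t
  rw [px, he]
  change fderiv ℝ (g ∘ fun y => (y, t)) x (EuclideanSpace.single j 1) = _
  rw [(hg.hasFDerivAt.comp x hc).fderiv]
  rfl

end Curried

/-- Bochner-type identity for the energy density
`e_ε(u) = (ε/2)|∂ₜu|² + (1/2)|∇u|²` of a smooth map `u`, with
`F = −ε ∂²ₜ u − Δu + ∂ₜ u`; in particular if `F ≡ 0` then
`−ε ∂²ₜ e_ε − Δ e_ε + ∂ₜ e_ε ≤ 0`. -/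
theorem stmt_12 (n L : ℕ) (hn : 1 ≤ n) (hL : 1 ≤ L) (ε : ℝ) (hε : 0 < ε)
    (u : EuclideanSpace ℝ (Fin n) → ℝ → EuclideanSpace ℝ (Fin L))
    (hu : ContDiff ℝ (⊤ : ℕ∞) (fun p : EuclideanSpace ℝ (Fin n) × ℝ => u p.1 p.2))
    (e : EuclideanSpace ℝ (Fin n) → ℝ → ℝ)
    (he : ∀ x t, e x t = ε / 2 * ‖pt u x t‖ ^ 2 + 1 / 2 * ∑ j, ‖px u j x t‖ ^ 2)
    (F : EuclideanSpace ℝ (Fin n) → ℝ → EuclideanSpace ℝ (Fin L))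
    (hF : ∀ x t, F x t = (-ε) • ptt u x t - lapv u x t + pt u x t) :
    (∀ (x : EuclideanSpace ℝ (Fin n)) (t : ℝ),
      -ε * ptt e x t - lapv e x t + pt e x t
        = (∑ j, ⟪px F j x t, px u j x t⟫) + ε * ⟪pt F x t, pt u x t⟫
          - (ε ^ 2 * ‖ptt u x t‖ ^ 2
              + 2 * ε * ∑ j, ‖pt (fun y s => px u j y s) x t‖ ^ 2
              + ∑ j, ∑ k, ‖px (fun y s => px u k y s) j x t‖ ^ 2)) ∧
    ((∀ x t, F x t = 0) →
      ∀ (x : EuclideanSpace ℝ (Fin n)) (t : ℝ),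
        -ε * ptt e x t - lapv e x t + pt e x t ≤ 0) := by
  classical
  set w : EuclideanSpace ℝ (Fin n) × ℝ → EuclideanSpace ℝ (Fin L) :=
    fun p => u p.1 p.2 with hw
  set vt : EuclideanSpace ℝ (Fin n) × ℝ := ((0 : EuclideanSpace ℝ (Fin n)), (1 : ℝ)) with hvt
  set ev : Fin n → EuclideanSpace ℝ (Fin n) × ℝ :=
    fun j => ((EuclideanSpace.single j 1 : EuclideanSpace ℝ (Fin n)), (0 : ℝ)) with hev
  set G0 := Dv vt w with hG0def
  set Gf : Fin n → (EuclideanSpace ℝ (Fin n) × ℝ) → EuclideanSpace ℝ (Fin L) :=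
    fun j => Dv (ev j) w with hGfdef
  have hG0 : ContDiff ℝ (⊤ : ℕ∞) G0 := hu.dv vt
  have hGf : ∀ j, ContDiff ℝ (⊤ : ℕ∞) (Gf j) := fun j => hu.dv (ev j)
  -- basic identifications
  have hptu : ∀ x t, pt u x t = G0 (x, t) := fun x t =>
    pt_eq (fun _ _ => rfl) x t (hu.diffAt _)
  have hpxu : ∀ j x t, px u j x t = Gf j (x, t) := fun j x t =>
    px_eq (fun _ _ => rfl) j x t (hu.diffAt _)
  have hpttu : ∀ x t, ptt u x t = Dv vt G0 (x, t) := fun x t =>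
    pt_eq (fun y s => hptu y s) x t (hG0.diffAt _)
  have hptpx : ∀ j x t, pt (fun y s => px u j y s) x t = Dv vt (Gf j) (x, t) := fun j x t =>
    pt_eq (fun y s => hpxu j y s) x t ((hGf j).diffAt _)
  have hpxpx : ∀ j k x t, px (fun y s => px u k y s) j x t = Dv (ev j) (Gf k) (x, t) :=
    fun j k x t => px_eq (fun y s => hpxu k y s) j x t ((hGf k).diffAt _)
  have hlapu : ∀ x t, lapv u x t = ∑ k, Dv (ev k) (Gf k) (x, t) := by
    intro x t
    rw [lapv]
    exact Finset.sum_congr rfl fun k _ => hpxpx k k x t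
  -- energy as a smooth function on the product space
  set EE : EuclideanSpace ℝ (Fin n) × ℝ → ℝ :=
    fun p => ε / 2 * ⟪G0 p, G0 p⟫ + 1 / 2 * ∑ j, ⟪Gf j p, Gf j p⟫ with hEEdef
  have hEE : ContDiff ℝ (⊤ : ℕ∞) EE :=
    (contDiff_const.mul (hG0.inner ℝ hG0)).add
      (contDiff_const.mul (ContDiff.sum fun j _ => (hGf j).inner ℝ (hGf j)))
  have heE : ∀ x t, e x t = EE (x, t) := by
    intro x t
    rw [he x t, hEEdef]
    simp only [hptu, hpxu, real_inner_self_eq_norm_sq]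
  -- first directional derivative of EE
  have hDvEE : ∀ a p, Dv a EE p
      = ε * ⟪Dv a G0 p, G0 p⟫ + ∑ j, ⟪Dv a (Gf j) p, Gf j p⟫ := by
    intro a p
    have h1 : DifferentiableAt ℝ (fun q => ε / 2 * ⟪G0 q, G0 q⟫) p :=
      ((contDiff_const.mul (hG0.inner ℝ hG0)).diffAt p :)
    have h2 : DifferentiableAt ℝ (fun q => (1:ℝ) / 2 * ∑ j, ⟪Gf j q, Gf j q⟫) p :=
      ((contDiff_const.mul (ContDiff.sum fun j _ => (hGf j).inner ℝ (hGf j))).diffAt p :)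
    rw [hEEdef]
    rw [Dv_add h1 h2, Dv_const_mul ((hG0.inner ℝ hG0).diffAt p),
      Dv_const_mul ((ContDiff.sum fun j _ => (hGf j).inner ℝ (hGf j)).diffAt p),
      Dv_sum (fun j _ => ((hGf j).inner ℝ (hGf j)).diffAt p),
      Dv_inner (hG0.diffAt p) (hG0.diffAt p)]
    have : ∀ j : Fin n, Dv a (fun q => ⟪Gf j q, Gf j q⟫) p
        = ⟪Gf j p, Dv a (Gf j) p⟫ + ⟪Dv a (Gf j) p, Gf j p⟫ := fun j =>
      Dv_inner ((hGf j).diffAt p) ((hGf j).diffAt p) a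
    rw [Finset.sum_congr rfl fun j _ => this j, Finset.sum_add_distrib]
    simp only [real_inner_comm]
    ring
  have hDvEEfun : ∀ a, Dv a EE
      = fun p => ε * ⟪Dv a G0 p, G0 p⟫ + ∑ j, ⟪Dv a (Gf j) p, Gf j p⟫ :=
    fun a => funext fun p => hDvEE a p
  have hD2EE : ∀ a b p, Dv b (Dv a EE) p
      = ε * (⟪Dv a G0 p, Dv b G0 p⟫ + ⟪Dv b (Dv a G0) p, G0 p⟫)
        + ∑ j, (⟪Dv a (Gf j) p, Dv b (Gf j) p⟫ + ⟪Dv b (Dv a (Gf j)) p, Gf j p⟫) := by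
    intro a b p
    rw [hDvEEfun a]
    have hA : DifferentiableAt ℝ (fun q => ε * ⟪Dv a G0 q, G0 q⟫) p :=
      (contDiff_const.mul ((hG0.dv a).inner ℝ hG0)).diffAt p
    have hB : DifferentiableAt ℝ (fun q => ∑ j, ⟪Dv a (Gf j) q, Gf j q⟫) p :=
      (ContDiff.sum fun j _ => ((hGf j).dv a).inner ℝ (hGf j)).diffAt p
    rw [Dv_add hA hB, Dv_const_mul (((hG0.dv a).inner ℝ hG0).diffAt p),
      Dv_sum (fun j _ => (((hGf j).dv a).inner ℝ (hGf j)).diffAt p),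
      Dv_inner ((hG0.dv a).diffAt p) (hG0.diffAt p)]
    congr 1
    exact Finset.sum_congr rfl fun j _ =>
      Dv_inner (((hGf j).dv a).diffAt p) ((hGf j).diffAt p) b
  have hpte : ∀ x t, pt e x t = Dv vt EE (x, t) := fun x t => pt_eq heE x t (hEE.diffAt _)
  have hpxe : ∀ j x t, px e j x t = Dv (ev j) EE (x, t) := fun j x t =>
    px_eq heE j x t (hEE.diffAt _)
  have hptte : ∀ x t, ptt e x t = Dv vt (Dv vt EE) (x, t) := fun x t =>
    pt_eq (fun y s => hpte y s) x t ((hEE.dv vt).diffAt _)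
  have hlape : ∀ x t, lapv e x t = ∑ k, Dv (ev k) (Dv (ev k) EE) (x, t) := by
    intro x t; rw [lapv]
    exact Finset.sum_congr rfl fun k _ =>
      px_eq (fun y s => hpxe k y s) k x t ((hEE.dv (ev k)).diffAt _)
  -- F as a function on the product space
  set M : EuclideanSpace ℝ (Fin n) × ℝ → EuclideanSpace ℝ (Fin L) :=
    fun p => (-ε) • Dv vt G0 p - (∑ k, Dv (ev k) (Gf k) p) + G0 p with hMdef
  have hM : ContDiff ℝ (⊤ : ℕ∞) M :=
    (((hG0.dv vt).const_smul (-ε)).sub (ContDiff.sum fun k _ => (hGf k).dv (ev k))).add hG0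
  have hFM : ∀ x t, F x t = M (x, t) := by
    intro x t; rw [hF x t, hpttu, hlapu, hptu]
  have hpxF : ∀ j x t, px F j x t = Dv (ev j) M (x, t) := fun j x t =>
    px_eq hFM j x t (hM.diffAt _)
  have hptF : ∀ x t, pt F x t = Dv vt M (x, t) := fun x t => pt_eq hFM x t (hM.diffAt _)
  have hDvM : ∀ a p, Dv a M p
      = (-ε) • Dv a (Dv vt G0) p - ∑ k, Dv a (Dv (ev k) (Gf k)) p + Dv a G0 p := by
    intro a p
    have hA : DifferentiableAt ℝ (fun q => (-ε) • Dv vt G0 q) p :=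
      ((hG0.dv vt).const_smul (-ε)).diffAt p
    have hB : DifferentiableAt ℝ (fun q => ∑ k, Dv (ev k) (Gf k) q) p :=
      (ContDiff.sum fun k _ => (hGf k).dv (ev k)).diffAt p
    rw [hMdef, Dv_add (hA.fun_sub hB) (hG0.diffAt p), Dv_sub hA hB,
      Dv_smul ((hG0.dv vt).diffAt p), Dv_sum (fun k _ => ((hGf k).dv (ev k)).diffAt p)]
  -- commutation of directional derivatives
  have hswap : ∀ j, Dv (ev j) G0 = Dv vt (Gf j) := fun j =>
    funext fun q => Dv_comm hu (ev j) vt q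
  have hswap2 : ∀ j k, Dv (ev j) (Gf k) = Dv (ev k) (Gf j) := fun j k =>
    funext fun q => Dv_comm hu (ev j) (ev k) q
  have h3a : ∀ j p, Dv (ev j) (Dv vt G0) p = Dv vt (Dv vt (Gf j)) p := by
    intro j p; rw [Dv_comm hG0 (ev j) vt p, hswap j]
  have h3b : ∀ j k p, Dv (ev j) (Dv (ev k) (Gf k)) p = Dv (ev k) (Dv (ev k) (Gf j)) p := by
    intro j k p; rw [Dv_comm (hGf k) (ev j) (ev k) p, hswap2 j k]
  have h3c : ∀ k p, Dv vt (Dv (ev k) (Gf k)) p = Dv (ev k) (Dv (ev k) G0) p := by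
    intro k p; rw [Dv_comm (hGf k) vt (ev k) p, ← hswap k]
  have key : ∀ (x : EuclideanSpace ℝ (Fin n)) (t : ℝ),
      -ε * ptt e x t - lapv e x t + pt e x t
        = (∑ j, ⟪px F j x t, px u j x t⟫) + ε * ⟪pt F x t, pt u x t⟫
          - (ε ^ 2 * ‖ptt u x t‖ ^ 2
              + 2 * ε * ∑ j, ‖pt (fun y s => px u j y s) x t‖ ^ 2
              + ∑ j, ∑ k, ‖px (fun y s => px u k y s) j x t‖ ^ 2) := by
    intro x t
    rw [hptte x t, hlape x t, hpte x t]
    simp only [hptpx, hpxpx]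
    simp only [hpxF, hptF, hpttu, hptu, hpxu]
    simp only [hD2EE, hDvEE, hDvM]
    have e1 : ∀ j : Fin n, (∑ i, Dv (ev j) (Dv (ev i) (Gf i)) (x, t))
        = ∑ i, Dv (ev i) (Dv (ev i) (Gf j)) (x, t) := fun j =>
      Finset.sum_congr rfl fun i _ => h3b j i (x, t)
    simp only [hswap, h3a, h3c, e1]
    simp only [inner_add_left, inner_sub_left, real_inner_smul_left, sum_inner,
      real_inner_self_eq_norm_sq]
    simp only [Finset.sum_add_distrib, Finset.sum_sub_distrib, ← Finset.mul_sum]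
    rw [show (∑ x_1 : Fin n, ∑ x_2 : Fin n,
          ⟪Dv (ev x_1) (Dv (ev x_1) (Gf x_2)) (x, t), Gf x_2 (x, t)⟫)
        = ∑ x_1 : Fin n, ∑ x_2 : Fin n,
          ⟪Dv (ev x_2) (Dv (ev x_2) (Gf x_1)) (x, t), Gf x_1 (x, t)⟫ from Finset.sum_comm]
    ring
  refine ⟨key, fun hF0 x t => ?_⟩
  have hFfun : F = fun _ _ => 0 := funext fun a => funext fun b => hF0 a b
  have h1 : ∀ j, px F j x t = (0 : EuclideanSpace ℝ (Fin L)) := by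
    intro j; rw [hFfun, px]; simp
  have h2 : pt F x t = (0 : EuclideanSpace ℝ (Fin L)) := by rw [hFfun, pt]; simp
  rw [key x t]
  simp only [h1, h2, inner_zero_left, Finset.sum_const_zero, mul_zero, zero_add, add_zero,
    zero_sub]
  have hnn : (0:ℝ) ≤ ε ^ 2 * ‖ptt u x t‖ ^ 2
      + 2 * ε * ∑ j, ‖pt (fun y s => px u j y s) x t‖ ^ 2
      + ∑ j, ∑ k, ‖px (fun y s => px u k y s) j x t‖ ^ 2 := by positivity
  linarith
end
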